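/- A subset F ⊆ E of edges of a graph G=(V,E) is the cut δ(V_1,…,V_k) of some partition of V if and only if for every cycle C in G, F does not intersect C in exactly one edge; equivalently, the characteristic vector y of F satisfies all cycle inequalities y_e ≤ Σ_{e'∈C∖{e}} y_{e'} for every cycle C and e ∈ C. -/

import Mathlib

open SimpleGraph

private lemma multicut_aux0 {V : Type*} [DecidableEq V] {G : SimpleGraph V}
    {F : Finset (Sym2 V)} {f : V → V}
    (hf : ∀ u v, G.Adj u v → (s(u, v) ∈ F ↔ f u ≠ f v)) :
    ∀ {a b : V} (q : G.Walk a b), (∀ e ∈ q.edges, e ∉ F) → f a = f b := by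
  intro a b q
  induction q with
  | nil => intro _; rfl
  | @cons a c b h q ih =>
    intro he
    have h1 : s(a, c) ∉ F := he _ (by simp)
    have h2 : f a = f c := not_not.mp (fun hne => h1 ((hf _ _ h).mpr hne))
    exact h2.trans (ih fun e hem => he e (by simp [hem]))

private lemma multicut_aux1 {V : Type*} [DecidableEq V] {G : SimpleGraph V}
    {F : Finset (Sym2 V)} {f : V → V}
    (hf : ∀ u v, G.Adj u v → (s(u, v) ∈ F ↔ f u ≠ f v)) :
    ∀ {a b : V} (q : G.Walk a b), f a = f b →
      (q.edges.filter (fun e => e ∈ F)).length ≠ 1 := by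
  intro a b q
  induction q with
  | nil => simp
  | @cons a c b h q ih =>
    intro hab
    by_cases hm : s(a, c) ∈ F
    · have hac : f a ≠ f c := (hf _ _ h).mp hm
      simp only [Walk.edges_cons, List.filter_cons, hm, decide_true, if_true,
        List.length_cons]
      intro hlen
      have h0 : (q.edges.filter (fun e => e ∈ F)).length = 0 :=
        Nat.succ_injective hlen
      have h0' : ∀ e ∈ q.edges, e ∉ F := by
        intro e he hef
        have : e ∈ q.edges.filter (fun e => e ∈ F) := by
          simp [List.mem_filter, he, hef]
        rw [List.length_eq_zero_iff] at h0
        simp [h0] at this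
      have : f c = f b := multicut_aux0 hf q h0'
      exact hac (hab.trans this.symm)
    · have hac : f a = f c := not_not.mp (fun hne => hm ((hf _ _ h).mpr hne))
      simp only [Walk.edges_cons, List.filter_cons, hm, decide_false, if_false]
      exact ih (hac.symm.trans hab)

/-- A subset `F` of the edges of `G` is a multicut (the cut of some partition of the
vertices) iff no cycle of `G` intersects `F` in exactly one edge. -/
theorem multicut_iff_no_cycle_cut_once {V : Type*} [Fintype V] [DecidableEq V]
    (G : SimpleGraph V) (F : Finset (Sym2 V)) (hF : ↑F ⊆ G.edgeSet) :
    (∃ f : V → V, ∀ u v, G.Adj u v → (s(u, v) ∈ F ↔ f u ≠ f v)) ↔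
      (∀ (v : V) (p : G.Walk v v), p.IsCycle →
        (p.edges.filter (fun e => e ∈ F)).length ≠ 1) := by
  classical
  constructor
  · rintro ⟨f, hf⟩ v p _ hlen
    exact multicut_aux1 hf p rfl hlen
  · intro hcyc
    set G' := G.deleteEdges ↑F with hG'
    refine ⟨fun v => Quot.out (G'.connectedComponentMk v), ?_⟩
    intro u v huv
    constructor
    · intro hmem hfeq
      -- equal representatives ⇒ reachable in G'
      have hcomp : G'.connectedComponentMk u = G'.connectedComponentMk v := by
        have h := congrArg (Quot.mk G'.Reachable) hfeq
        exact (Quot.out_eq _).symm.trans (h.trans (Quot.out_eq _))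
      have hreach : G'.Reachable u v := ConnectedComponent.eq.mp hcomp
      obtain ⟨p⟩ := hreach
      obtain ⟨p₂, hp₂⟩ := p.toPath
      have hedges : ∀ e ∈ p₂.edges, e ∉ F := by
        intro e he hef
        have : e ∈ G'.edgeSet := p₂.edges_subset_edgeSet he
        rw [hG', edgeSet_deleteEdges] at this
        exact this.2 hef
      have hedgesG : ∀ e ∈ p₂.edges, e ∈ G.edgeSet := by
        intro e he
        have : e ∈ G'.edgeSet := p₂.edges_subset_edgeSet he
        rw [hG', edgeSet_deleteEdges] at this
        exact this.1
      let pt : G.Walk u v := p₂.transfer G hedgesG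
      have hptedges : pt.edges = p₂.edges := Walk.edges_transfer _ _
      have hptpath : pt.IsPath := hp₂.transfer hedgesG
      have hne : s(v, u) ∉ pt.edges := by
        rw [hptedges]
        intro hcon
        exact hedges _ hcon (by rwa [Sym2.eq_swap])
      let q : G.Walk v v := Walk.cons huv.symm pt
      have hq : q.IsCycle := (Walk.cons_isCycle_iff _ _).mpr ⟨hptpath, hne⟩
      apply hcyc v q hq
      have hqe : q.edges = s(v, u) :: pt.edges := rfl
      have hvu : s(v, u) ∈ F := by rwa [Sym2.eq_swap]
      have hnilf : pt.edges.filter (fun e => e ∈ F) = [] := by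
        rw [List.filter_eq_nil_iff]
        intro e he
        simp only [decide_eq_true_eq]
        exact hedges e (hptedges ▸ he)
      rw [hqe, List.filter_cons]
      simp [hvu, hnilf]
    · intro hne
      by_contra hmem
      have hadj : G'.Adj u v := by
        rw [hG', deleteEdges_adj]
        exact ⟨huv, hmem⟩
      have hcomp : G'.connectedComponentMk u = G'.connectedComponentMk v :=
        ConnectedComponent.sound hadj.reachable
      exact hne (congrArg Quot.out hcomp)
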